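/- Let X and Y be n×n complex matrices, let (C_j)_{j≥2} be a sequence of n×n complex matrices, and let r_z > 0 be such that Σ_{j≥2} r^j ‖C_j‖ < ∞ for every 0 < r < r_z. For n ≥ 2 let Ψₙ(λ) = e^{λX/2} e^{λY/2} e^{λ²C₂} e^{λ³C₃} ⋯ e^{λⁿCₙ} · e^{λⁿCₙ} ⋯ e^{λ³C₃} e^{λ²C₂} e^{λY/2} e^{λX/2}, and assume that for every n ≥ 2 and every k ≤ n the k-th derivative of Ψₙ at λ = 0 equals (X+Y)^k. Then for every real λ with |λ| < r_z, lim_{n→∞} Ψₙ(λ) = exp(λ(X+Y)). -/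

import Mathlib

attribute [local instance] Matrix.linftyOpNormedAddCommGroup Matrix.linftyOpNormedRing
  Matrix.linftyOpNormedAlgebra Matrix.linftyOpNormedSpace

/-- The truncated symmetric (palindromic) Zassenhaus product
`Ψₙ(λ) = e^{λX/2} e^{λY/2} e^{λ²C₂} ⋯ e^{λⁿCₙ} · e^{λⁿCₙ} ⋯ e^{λ²C₂} e^{λY/2} e^{λX/2}`. -/
noncomputable def symmZassenhausProd {m : ℕ} (X Y : Matrix (Fin m) (Fin m) ℂ)
    (C : ℕ → Matrix (Fin m) (Fin m) ℂ) (n : ℕ) (l : ℝ) : Matrix (Fin m) (Fin m) ℂ :=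
  NormedSpace.exp ((l / 2) • X) * NormedSpace.exp ((l / 2) • Y) *
    ((List.range' 2 (n - 1)).map fun j => NormedSpace.exp (l ^ j • C j)).prod *
    (((List.range' 2 (n - 1)).map fun j => NormedSpace.exp (l ^ j • C j)).reverse).prod *
    NormedSpace.exp ((l / 2) • Y) * NormedSpace.exp ((l / 2) • X)

namespace SymmZassenhausAux

open NormedSpace Filter

section complexAux

variable {E : Type*} [NormedAddCommGroup E] [NormedSpace ℂ E] [CompleteSpace E]

lemma hasDerivAt_comp_ofReal' {f : ℂ → E} {f' : E} {x : ℝ} (hf : HasDerivAt f f' ↑x) :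
    HasDerivAt (fun t : ℝ => f ↑t) f' x := by
  have h := (hf.hasFDerivAt.restrictScalars ℝ).comp_hasDerivAt x
    Complex.ofRealCLM.hasDerivAt
  simpa [Function.comp_def] using h

lemma deriv_comp_ofReal' {f : ℂ → E} (hf : Differentiable ℂ f) (x : ℝ) :
    deriv (fun t : ℝ => f ↑t) x = deriv f ↑x :=
  (hasDerivAt_comp_ofReal' (hf ↑x).hasDerivAt).deriv

lemma differentiable_deriv_of_entire {f : ℂ → E} (hf : Differentiable ℂ f) :
    Differentiable ℂ (deriv f) :=
  Complex.analyticOnNhd_univ_iff_differentiable.mp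
    ((Complex.analyticOnNhd_univ_iff_differentiable.mpr hf).deriv)

lemma iteratedDeriv_comp_ofReal' {f : ℂ → E} (hf : Differentiable ℂ f) (k : ℕ) (x : ℝ) :
    iteratedDeriv k (fun t : ℝ => f ↑t) x = iteratedDeriv k f ↑x := by
  induction k generalizing f with
  | zero => simp
  | succ k ih =>
    rw [iteratedDeriv_succ', iteratedDeriv_succ',
      show (deriv fun t : ℝ => f ↑t) = fun t : ℝ => deriv f ↑t from
        funext (deriv_comp_ofReal' hf)]
    exact ih (differentiable_deriv_of_entire hf)

/-- Cauchy estimate for the iterated derivatives of an entire function. -/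
lemma norm_iteratedDeriv_le_of_entire {f : ℂ → E} (hf : Differentiable ℂ f) {r M : ℝ}
    (hr : 0 < r) (hM : ∀ z : ℂ, ‖z‖ = r → ‖f z‖ ≤ M) (k : ℕ) :
    ‖iteratedDeriv k f 0‖ ≤ k.factorial * M / r ^ k := by
  have hM0 : 0 ≤ M := le_trans (norm_nonneg (f r)) (hM r (by simp [abs_of_pos hr]))
  lift r to NNReal using hr.le with R hR
  have hR0 : 0 < R := by exact_mod_cast hr
  have h := hf.hasFPowerSeriesOnBall 0 hR0
  have h1 : iteratedDeriv k f 0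
      = k.factorial • (cauchyPowerSeries f 0 R k fun _ => (1 : ℂ)) := by
    rw [iteratedDeriv_eq_iteratedFDeriv, ← h.factorial_smul (1 : ℂ) k]
  have h2 : ‖cauchyPowerSeries f 0 R k fun _ => (1 : ℂ)‖
      ≤ ‖cauchyPowerSeries f 0 R k‖ := by
    simpa using (cauchyPowerSeries f 0 R k).le_opNorm fun _ => (1 : ℂ)
  have hcont : Continuous fun θ : ℝ => ‖f (circleMap 0 R θ)‖ :=
    (hf.continuous.comp (continuous_circleMap 0 R)).norm
  have hint : (∫ θ : ℝ in (0)..2 * Real.pi, ‖f (circleMap 0 R θ)‖) ≤ 2 * Real.pi * M := by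
    have := intervalIntegral.integral_mono_on (μ := MeasureTheory.volume)
      Real.two_pi_pos.le (hcont.intervalIntegrable _ _) intervalIntegrable_const
      (fun θ _ => hM _ (by
        rw [norm_circleMap_zero, abs_of_nonneg R.coe_nonneg]))
    simpa [mul_comm] using this
  have h3 := norm_cauchyPowerSeries_le f 0 R k
  have h4 : ((2 * Real.pi)⁻¹ * ∫ θ : ℝ in (0)..2 * Real.pi, ‖f (circleMap 0 R θ)‖) ≤ M := by
    rw [inv_mul_le_iff₀ Real.two_pi_pos]
    linarith [hint]
  have h5 : ‖cauchyPowerSeries f 0 R k fun _ => (1 : ℂ)‖ ≤ M * |(R : ℝ)|⁻¹ ^ k :=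
    h2.trans (h3.trans (mul_le_mul_of_nonneg_right h4 (by positivity)))
  calc ‖iteratedDeriv k f 0‖
      = ‖k.factorial • (cauchyPowerSeries f 0 R k fun _ => (1 : ℂ))‖ := by rw [h1]
    _ ≤ k.factorial * ‖cauchyPowerSeries f 0 R k fun _ => (1 : ℂ)‖ := norm_nsmul_le
    _ ≤ k.factorial * (M * |(R : ℝ)|⁻¹ ^ k) := by gcongr
    _ = k.factorial * M / (R : ℝ) ^ k := by
        rw [abs_of_nonneg R.coe_nonneg, div_eq_mul_inv, mul_assoc, inv_pow]

end complexAux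

section algAux

variable {𝔸 : Type*} [NormedRing 𝔸] [NormedAlgebra ℂ 𝔸] [CompleteSpace 𝔸] [NormOneClass 𝔸]

lemma norm_exp_le' (x : 𝔸) : ‖exp x‖ ≤ Real.exp ‖x‖ := by
  rw [exp_eq_tsum (𝕂 := ℂ)]
  have hs : Summable fun n : ℕ => ‖x‖ ^ n / n.factorial := Real.summable_pow_div_factorial _
  have hb : ∀ n : ℕ, ‖((n.factorial : ℂ)⁻¹ • x ^ n)‖ ≤ ‖x‖ ^ n / n.factorial := by
    intro n
    rw [norm_smul, norm_inv, div_eq_inv_mul]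
    gcongr
    · simp
    · exact norm_pow_le x n
  have hsn : Summable fun n : ℕ => ‖((n.factorial : ℂ)⁻¹ • x ^ n)‖ :=
    Summable.of_nonneg_of_le (fun n => norm_nonneg _) hb hs
  refine (norm_tsum_le_tsum_norm hsn).trans ?_
  refine (Summable.tsum_le_tsum hb hsn hs).trans ?_
  rw [Real.exp_eq_exp_ℝ, exp_eq_tsum_div]

lemma norm_exp_list_prod (L : List ℕ) (g : ℕ → 𝔸) :
    ‖(L.map fun j => exp (g j)).prod‖ ≤ Real.exp ((L.map fun j => ‖g j‖).sum) := by
  induction L with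
  | nil => simp
  | cons a L ih =>
    simp only [List.map_cons, List.prod_cons, List.sum_cons, Real.exp_add]
    exact (norm_mul_le _ _).trans
      (mul_le_mul (norm_exp_le' _) ih (norm_nonneg _) (Real.exp_pos _).le)

lemma differentiable_list_prod (L : List ℕ) (g : ℕ → ℂ → 𝔸)
    (hg : ∀ j, Differentiable ℂ (g j)) :
    Differentiable ℂ fun z => (L.map fun j => g j z).prod := by
  induction L with
  | nil => simpa using differentiable_const (1 : 𝔸)
  | cons a L ih =>
    simp only [List.map_cons, List.prod_cons]
    exact (hg a).mul ih

lemma differentiable_exp_comp {g : ℂ → 𝔸} (hg : Differentiable ℂ g) :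
    Differentiable ℂ fun z => exp (g z) :=
  fun z => (exp_analytic (𝕂 := ℂ) (g z)).differentiableAt.comp z (hg z)

lemma iteratedDeriv_exp_smul_mul (A : 𝔸) : ∀ (k : ℕ) (B : 𝔸),
    iteratedDeriv k (fun z : ℂ => exp (z • A) * B) 0 = A ^ k * B := by
  intro k
  induction k with
  | zero => intro B; simp
  | succ k ih =>
    intro B
    rw [iteratedDeriv_succ']
    have hd : (deriv fun z : ℂ => exp (z • A) * B)
        = fun z : ℂ => exp (z • A) * (A * B) :=
      funext fun z => by
        rw [((hasDerivAt_exp_smul_const A z).mul_const B).deriv, mul_assoc]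
    rw [hd, ih (A * B), pow_succ, mul_assoc]

lemma iteratedDeriv_exp_smul (A : 𝔸) (k : ℕ) :
    iteratedDeriv k (fun z : ℂ => exp (z • A)) 0 = A ^ k := by
  simpa using iteratedDeriv_exp_smul_mul A k 1

end algAux

lemma list_range'_map_sum (g : ℕ → ℝ) (s k : ℕ) :
    ((List.range' s k).map g).sum = ∑ i ∈ Finset.range k, g (s + i) := by
  induction k generalizing s with
  | zero => simp
  | succ k ih =>
    rw [List.range'_succ, List.map_cons, List.sum_cons, ih (s + 1),
      Finset.sum_range_succ']
    simp only [add_zero]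
    rw [add_comm]
    congr 1
    exact Finset.sum_congr rfl fun i _ => by rw [show s + 1 + i = s + (i + 1) by omega]

end SymmZassenhausAux

open NormedSpace Filter SymmZassenhausAux in
/-- If `Σ_{j≥2} r^j ‖C_j‖ < ∞` for all `0 < r < r_z` and all derivatives of `Ψₙ` at `0` up to
order `n` equal `(X+Y)^k`, then `Ψₙ(λ) → exp (λ(X+Y))` as `n → ∞`, for every `|λ| < r_z`. -/
theorem symmZassenhausProd_tendsto_exp (m : ℕ) (X Y : Matrix (Fin m) (Fin m) ℂ)
    (C : ℕ → Matrix (Fin m) (Fin m) ℂ) (r_z : ℝ) (hr : 0 < r_z)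
    (hsum : ∀ r : ℝ, 0 < r → r < r_z → Summable fun j : ℕ => r ^ (j + 2) * ‖C (j + 2)‖)
    (hderiv : ∀ n : ℕ, 2 ≤ n → ∀ k : ℕ, k ≤ n →
      iteratedDeriv k (fun l : ℝ => symmZassenhausProd X Y C n l) 0 = (X + Y) ^ k) :
    ∀ l : ℝ, |l| < r_z →
      Filter.Tendsto (fun n : ℕ => symmZassenhausProd X Y C n l) Filter.atTop
        (nhds (NormedSpace.exp (l • (X + Y)))) := by
  intro l hl
  rcases Nat.eq_zero_or_pos m with hm | hm
  · subst hm
    haveI : Subsingleton (Matrix (Fin 0) (Fin 0) ℂ) :=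
      ⟨fun a b => by ext i j; exact absurd i.2 (by omega)⟩
    exact tendsto_const_nhds.congr fun n => (Subsingleton.elim _ _)
  haveI : Nonempty (Fin m) := ⟨⟨0, hm⟩⟩
  haveI : NormOneClass (Matrix (Fin m) (Fin m) ℂ) := Matrix.linfty_opNormOneClass
  haveI : CompleteSpace (Matrix (Fin m) (Fin m) ℂ) := FiniteDimensional.complete ℂ _
  set A : Matrix (Fin m) (Fin m) ℂ := X + Y with hA
  set r : ℝ := (|l| + r_z) / 2 with hrdef
  have hlr : |l| < r := by rw [hrdef]; linarith
  have hrz : r < r_z := by rw [hrdef]; linarith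
  have hr0 : 0 < r := lt_of_le_of_lt (abs_nonneg l) hlr
  set q : ℝ := |l| / r with hqdef
  have hq0 : 0 ≤ q := div_nonneg (abs_nonneg l) hr0.le
  have hq1 : q < 1 := (div_lt_one hr0).mpr hlr
  have hS := hsum r hr0 hrz
  set S : ℝ := ∑' j : ℕ, r ^ (j + 2) * ‖C (j + 2)‖ with hSdef
  set G : ℕ → ℂ → Matrix (Fin m) (Fin m) ℂ := fun n z =>
    exp ((z / 2) • X) * exp ((z / 2) • Y) *
      ((List.range' 2 (n - 1)).map fun j => exp (z ^ j • C j)).prod *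
      (((List.range' 2 (n - 1)).map fun j => exp (z ^ j • C j)).reverse).prod *
      exp ((z / 2) • Y) * exp ((z / 2) • X) with hG
  have hcoe : ∀ (n : ℕ) (t : ℝ), symmZassenhausProd X Y C n t = G n ↑t := by
    intro n t
    have hsm : ∀ (M : Matrix (Fin m) (Fin m) ℂ), ((t : ℂ) / 2) • M = (t / 2 : ℝ) • M := by
      intro M
      rw [show ((t : ℂ) / 2) = ((t / 2 : ℝ) : ℂ) by push_cast; ring, Complex.coe_smul]
    have hpw : ∀ (j : ℕ) (M : Matrix (Fin m) (Fin m) ℂ),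
        ((t : ℂ)) ^ j • M = (t ^ j : ℝ) • M := by
      intro j M
      rw [← Complex.ofReal_pow, Complex.coe_smul]
    rw [hG]
    simp only [symmZassenhausProd, hsm, hpw]
  have hfac : ∀ (B : Matrix (Fin m) (Fin m) ℂ),
      Differentiable ℂ fun z : ℂ => exp ((z / 2) • B) :=
    fun B => differentiable_exp_comp ((differentiable_id.div_const 2).smul_const B)
  have hfacj : ∀ j : ℕ, Differentiable ℂ fun z : ℂ => exp (z ^ j • C j) :=
    fun j => differentiable_exp_comp ((differentiable_pow j).smul_const (C j))
  have hGdiff : ∀ n, Differentiable ℂ (G n) := by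
    intro n
    rw [hG]
    have hP : Differentiable ℂ fun z : ℂ =>
        ((List.range' 2 (n - 1)).map fun j => exp (z ^ j • C j)).prod :=
      differentiable_list_prod _ _ hfacj
    have hPrev : Differentiable ℂ fun z : ℂ =>
        (((List.range' 2 (n - 1)).map fun j => exp (z ^ j • C j)).reverse).prod := by
      have he : (fun z : ℂ =>
          (((List.range' 2 (n - 1)).map fun j => exp (z ^ j • C j)).reverse).prod)
          = fun z : ℂ =>
          (((List.range' 2 (n - 1)).reverse).map fun j => exp (z ^ j • C j)).prod := by
        funext z; rw [← List.map_reverse]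
      rw [he]
      exact differentiable_list_prod _ _ hfacj
    exact (((((hfac X).mul (hfac Y)).mul hP).mul hPrev).mul (hfac Y)).mul (hfac X)
  -- bounds on the circle of radius r
  set Mg : ℝ := Real.exp (r / 2 * ‖X‖) * Real.exp (r / 2 * ‖Y‖) * Real.exp S * Real.exp S *
    Real.exp (r / 2 * ‖Y‖) * Real.exp (r / 2 * ‖X‖) with hMgdef
  have hGbound : ∀ (n : ℕ) (z : ℂ), ‖z‖ = r → ‖G n z‖ ≤ Mg := by
    intro n z hz
    have hz2 : ‖z / 2‖ = r / 2 := by rw [norm_div, hz]; norm_num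
    have hfb : ∀ (B : Matrix (Fin m) (Fin m) ℂ),
        ‖exp ((z / 2) • B)‖ ≤ Real.exp (r / 2 * ‖B‖) := by
      intro B
      refine (norm_exp_le' _).trans_eq ?_
      rw [norm_smul, hz2]
    have hsumlist : ((List.range' 2 (n - 1)).map fun j => ‖z ^ j • C j‖).sum ≤ S := by
      rw [list_range'_map_sum (fun j => ‖z ^ j • C j‖) 2 (n - 1)]
      calc ∑ i ∈ Finset.range (n - 1), ‖z ^ (2 + i) • C (2 + i)‖
          = ∑ i ∈ Finset.range (n - 1), r ^ (i + 2) * ‖C (i + 2)‖ := by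
            refine Finset.sum_congr rfl fun i _ => ?_
            rw [norm_smul, norm_pow, hz, add_comm 2 i]
        _ ≤ S := Summable.sum_le_tsum _ (fun i _ => by positivity) hS
    have hP : ‖((List.range' 2 (n - 1)).map fun j => exp (z ^ j • C j)).prod‖
        ≤ Real.exp S :=
      (norm_exp_list_prod _ _).trans (Real.exp_le_exp.mpr hsumlist)
    have hPrev : ‖(((List.range' 2 (n - 1)).map fun j => exp (z ^ j • C j)).reverse).prod‖
        ≤ Real.exp S := by
      rw [← List.map_reverse]
      refine (norm_exp_list_prod _ _).trans (Real.exp_le_exp.mpr ?_)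
      rw [List.map_reverse, List.sum_reverse]
      exact hsumlist
    have nm : ∀ {a b : Matrix (Fin m) (Fin m) ℂ} {x y : ℝ},
        ‖a‖ ≤ x → ‖b‖ ≤ y → ‖a * b‖ ≤ x * y := fun ha hb =>
      (norm_mul_le _ _).trans (mul_le_mul ha hb (norm_nonneg _) ((norm_nonneg _).trans ha))
    rw [hG, hMgdef]
    exact nm (nm (nm (nm (nm (hfb X) (hfb Y)) hP) hPrev) (hfb Y)) (hfb X)
  have hexpA : Differentiable ℂ fun z : ℂ => exp (z • A) :=
    differentiable_exp_comp (differentiable_id.smul_const A)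
  set MA : ℝ := Real.exp (r * ‖A‖) with hMAdef
  have hAbound : ∀ z : ℂ, ‖z‖ = r → ‖exp (z • A)‖ ≤ MA := by
    intro z hz
    refine (norm_exp_le' _).trans_eq ?_
    rw [norm_smul, hz]
  set Mtot : ℝ := Mg + MA with hMtotdef
  have hMg0 : 0 < Mg := by rw [hMgdef]; positivity
  have hMA0 : 0 < MA := Real.exp_pos _
  have hMtot0 : 0 < Mtot := by rw [hMtotdef]; positivity
  clear_value A r q S G Mg MA Mtot
  have hdG : ∀ n, 2 ≤ n → ∀ k, k ≤ n → iteratedDeriv k (G n) 0 = A ^ k := by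
    intro n hn k hk
    have h := hderiv n hn k hk
    rw [show (fun l : ℝ => symmZassenhausProd X Y C n l) = fun t : ℝ => G n ↑t from
      funext (hcoe n)] at h
    rw [iteratedDeriv_comp_ofReal' (hGdiff n) k 0] at h
    simpa using h
  have key : ∀ n : ℕ, 2 ≤ n →
      ‖symmZassenhausProd X Y C n l - exp ((l : ℂ) • A)‖
        ≤ Mtot * ((1 - q)⁻¹ * q ^ (n + 1)) := by
    intro n hn
    have h1 := Complex.hasSum_taylorSeries_of_entire (hGdiff n) 0 (l : ℂ)
    have h2 := Complex.hasSum_taylorSeries_of_entire hexpA 0 (l : ℂ)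
    simp only [sub_zero] at h1 h2
    have h2' : HasSum (fun k : ℕ => (k.factorial : ℂ)⁻¹ • ((l : ℂ)) ^ k • A ^ k)
        (exp ((l : ℂ) • A)) := by
      have e : ∀ k : ℕ, iteratedDeriv k (fun z : ℂ => exp (z • A)) 0 = A ^ k :=
        fun k => iteratedDeriv_exp_smul A k
      simp only [e] at h2
      exact h2
    have hdiff := h1.sub h2'
    set h : ℕ → ℝ := fun k => if k ≤ n then 0 else Mtot * q ^ k with hhdef
    have hb : ∀ k : ℕ, ‖(k.factorial : ℂ)⁻¹ • ((l : ℂ)) ^ k • iteratedDeriv k (G n) 0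
        - (k.factorial : ℂ)⁻¹ • ((l : ℂ)) ^ k • A ^ k‖ ≤ h k := by
      intro k
      by_cases hkn : k ≤ n
      · simp [hhdef, hkn, hdG n hn k hkn]
      · rw [hhdef]
        simp only [if_neg hkn]
        have hkf : ((k.factorial : ℝ)) ≠ 0 := Nat.cast_ne_zero.mpr k.factorial_ne_zero
        have hrk : (r : ℝ) ^ k ≠ 0 := by positivity
        have e1 : ‖(k.factorial : ℂ)⁻¹ • ((l : ℂ)) ^ k • iteratedDeriv k (G n) 0
            - (k.factorial : ℂ)⁻¹ • ((l : ℂ)) ^ k • A ^ k‖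
            = (k.factorial : ℝ)⁻¹ * (|l| ^ k * ‖iteratedDeriv k (G n) 0 - A ^ k‖) := by
          rw [← smul_sub, ← smul_sub, norm_smul, norm_smul, norm_inv, norm_pow]
          simp [Complex.norm_real, Real.norm_eq_abs]
        have e2 : ‖iteratedDeriv k (G n) 0 - A ^ k‖
            ≤ k.factorial * Mg / r ^ k + k.factorial * MA / r ^ k := by
          refine (norm_sub_le _ _).trans (add_le_add ?_ ?_)
          · exact norm_iteratedDeriv_le_of_entire (hGdiff n) hr0 (hGbound n) k
          · rw [← iteratedDeriv_exp_smul (𝔸 := Matrix (Fin m) (Fin m) ℂ) A k]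
            exact norm_iteratedDeriv_le_of_entire hexpA hr0 hAbound k
        rw [e1]
        calc (k.factorial : ℝ)⁻¹ * (|l| ^ k * ‖iteratedDeriv k (G n) 0 - A ^ k‖)
            ≤ (k.factorial : ℝ)⁻¹ *
              (|l| ^ k * (k.factorial * Mg / r ^ k + k.factorial * MA / r ^ k)) := by
              gcongr
          _ = Mtot * q ^ k := by
              rw [hMtotdef, hqdef, div_pow]
              field_simp
    have hsummg : Summable fun k : ℕ => Mtot * q ^ k :=
      (summable_geometric_of_lt_one hq0 hq1).mul_left Mtot
    have hsummh : Summable h := by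
      refine Summable.of_nonneg_of_le (fun k => ?_) (fun k => ?_) hsummg
      · rw [hhdef]; dsimp only; split <;> positivity
      · rw [hhdef]; dsimp only; split
        · positivity
        · exact le_rfl
    have hsumnorm : Summable fun k : ℕ =>
        ‖(k.factorial : ℂ)⁻¹ • ((l : ℂ)) ^ k • iteratedDeriv k (G n) 0
          - (k.factorial : ℂ)⁻¹ • ((l : ℂ)) ^ k • A ^ k‖ :=
      Summable.of_nonneg_of_le (fun k => norm_nonneg _) hb hsummh
    have hmain : ‖G n (l : ℂ) - exp ((l : ℂ) • A)‖ ≤ ∑' k, h k := by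
      rw [← hdiff.tsum_eq]
      exact (norm_tsum_le_tsum_norm hsumnorm).trans (Summable.tsum_le_tsum hb hsumnorm hsummh)
    have htail : ∑' k, h k ≤ Mtot * ((1 - q)⁻¹ * q ^ (n + 1)) := by
      have hshift : (fun i : ℕ => h (i + (n + 1))) = fun i => (Mtot * q ^ (n + 1)) * q ^ i := by
        funext i
        rw [hhdef]
        dsimp only
        rw [if_neg (by omega), pow_add]
        ring
      have := (Summable.sum_add_tsum_nat_add (f := h) (n + 1) hsummh).symm
      rw [Finset.sum_eq_zero (fun i hi => by
        rw [hhdef]; dsimp only; rw [if_pos (by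
          have := Finset.mem_range.mp hi; omega)]), zero_add, hshift,
        tsum_mul_left, tsum_geometric_of_lt_one hq0 hq1] at this
      rw [this]
      exact le_of_eq (by ring)
    rw [hcoe n l]
    exact hmain.trans htail
  have hexp_eq : NormedSpace.exp (l • A) = exp ((l : ℂ) • A) := by
    rw [Complex.coe_smul]
  refine tendsto_iff_norm_sub_tendsto_zero.mpr ?_
  refine squeeze_zero' (g := fun n : ℕ => Mtot * ((1 - q)⁻¹ * q ^ (n + 1)))
    (Eventually.of_forall fun n => norm_nonneg _)
    (eventually_atTop.mpr ⟨2, fun n hn => ?_⟩) ?_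
  · rw [hexp_eq]
    exact key n hn
  · have hpow : Tendsto (fun n : ℕ => q ^ (n + 1)) atTop (nhds 0) :=
      (tendsto_pow_atTop_nhds_zero_of_lt_one hq0 hq1).comp (tendsto_add_atTop_nat 1)
    have := hpow.const_mul (Mtot * (1 - q)⁻¹)
    simp only [mul_zero] at this
    refine this.congr fun n => by ring
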